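/- Let J_s be the standard skew-symmetric (2s)×(2s) block matrix [[0, I_s], [-I_s, 0]]. For n, s ≥ 1, the image of the map α ↦ α J_s αᵀ from the complex n×(2s) matrices to the complex n×n matrices is exactly the set of skew-symmetric complex n×n matrices of rank at most 2s. This realizes the complex affine categorical quotient Hom(ℂ²ˢ, ℂⁿ) // Sp(s,ℂ) as the variety of skew matrices of rank ≤ 2s, the image in p⁺ of the closure of the s-th holomorphic nilpotent orbit of so*(2n). -/

import Mathlib

open Matrix

/-- Any skew-symmetric complex matrix of rank at most `2*s` decomposes as
`A * Bᵀ - B * Aᵀ` with `A B : Matrix (Fin n) (Fin s) ℂ`. -/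
lemma skew_decomp : ∀ (s n : ℕ) (X : Matrix (Fin n) (Fin n) ℂ), Xᵀ = -X →
    X.rank ≤ 2 * s → ∃ A B : Matrix (Fin n) (Fin s) ℂ, X = A * Bᵀ - B * Aᵀ := by
  intro s
  induction s with
  | zero =>
    intro n X hX hr
    refine ⟨0, 0, ?_⟩
    have h0 : X.rank = 0 := Nat.le_zero.mp (by simpa using hr)
    rw [Matrix.rank] at h0
    have hbot : LinearMap.range X.mulVecLin = ⊥ := Submodule.finrank_eq_zero.mp h0
    have hcol : ∀ b, X.mulVecLin (Pi.single b 1) = 0 := by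
      intro b
      have : X.mulVecLin (Pi.single b 1) ∈ (⊥ : Submodule ℂ (Fin n → ℂ)) := by
        rw [← hbot]; exact LinearMap.mem_range_self _ _
      simpa using this
    ext a b
    have := congrFun (hcol b) a
    simp [Matrix.mulVecLin_apply, Matrix.mulVec_single] at this
    simpa using this
  | succ s ih =>
    intro n X hX hr
    by_cases hX0 : X = 0
    · exact ⟨0, 0, by simp [hX0]⟩
    have hskew : ∀ a b, X b a = -X a b := by
      intro a b
      have := congrFun (congrFun hX a) b
      simpa [Matrix.transpose_apply] using this
    have hdiag : ∀ a, X a a = 0 := by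
      intro a
      have h := hskew a a
      linear_combination h / 2
    obtain ⟨i, j, hij⟩ : ∃ i j, X i j ≠ 0 := by
      by_contra h
      push_neg at h
      exact hX0 (Matrix.ext fun a b => h a b)
    set c : ℂ := X i j with hc
    set xi : Fin n → ℂ := fun k => X k i with hxi
    set xj : Fin n → ℂ := fun k => X k j with hxj
    set Y : Matrix (Fin n) (Fin n) ℂ :=
      Matrix.of (fun a b => X a b - c⁻¹ * (X a i * X b j - X a j * X b i)) with hY
    have hYab : ∀ a b, Y a b = X a b - c⁻¹ * (X a i * X b j - X a j * X b i) :=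
      fun a b => rfl
    have hYskew : Yᵀ = -Y := by
      ext a b
      simp only [Matrix.transpose_apply, Matrix.neg_apply, hYab]
      rw [hskew a b]
      ring
    -- rows and columns i and j of Y vanish
    have hrow_i : ∀ b, Y i b = 0 := by
      intro b
      rw [hYab, hdiag i, ← hc, hskew b i]
      field_simp
      ring
    have hrow_j : ∀ b, Y j b = 0 := by
      intro b
      rw [hYab, hdiag j]
      rw [show X j i = -c from by rw [hc]; exact hskew i j, hskew b j]
      field_simp
      ring
    have hcol_i : ∀ a, Y a i = 0 := by
      intro a
      have := congrFun (congrFun hYskew a) i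
      simp only [Matrix.transpose_apply, Matrix.neg_apply] at this
      rw [hrow_i a] at this
      simpa using this.symm
    have hcol_j : ∀ a, Y a j = 0 := by
      intro a
      have := congrFun (congrFun hYskew a) j
      simp only [Matrix.transpose_apply, Matrix.neg_apply] at this
      rw [hrow_j a] at this
      simpa using this.symm
    -- elements of the range of Y vanish at coordinates i and j
    have hWi : ∀ z : Fin n → ℂ, (Y.mulVecLin z) i = 0 := by
      intro z
      simp only [Matrix.mulVecLin_apply, Matrix.mulVec, dotProduct]
      exact Finset.sum_eq_zero fun b _ => by rw [hrow_i b]; ring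
    have hWj : ∀ z : Fin n → ℂ, (Y.mulVecLin z) j = 0 := by
      intro z
      simp only [Matrix.mulVecLin_apply, Matrix.mulVec, dotProduct]
      exact Finset.sum_eq_zero fun b _ => by rw [hrow_j b]; ring
    -- xi and xj are columns of X
    have hxi_mem : xi ∈ LinearMap.range X.mulVecLin := by
      refine ⟨Pi.single i 1, ?_⟩
      ext k
      simp [Matrix.mulVecLin_apply, Matrix.mulVec_single, hxi]
    have hxj_mem : xj ∈ LinearMap.range X.mulVecLin := by
      refine ⟨Pi.single j 1, ?_⟩
      ext k
      simp [Matrix.mulVecLin_apply, Matrix.mulVec_single, hxj]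
    set W : Submodule ℂ (Fin n → ℂ) := LinearMap.range Y.mulVecLin with hW
    set U : Submodule ℂ (Fin n → ℂ) := Submodule.span ℂ {xi, xj} with hU
    -- Y's range is inside X's range
    have hYmulVec : ∀ z, Y.mulVec z
        = X.mulVec z - (c⁻¹ * (xj ⬝ᵥ z)) • xi + (c⁻¹ * (xi ⬝ᵥ z)) • xj := by
      intro z
      ext k
      simp only [Matrix.mulVec, dotProduct, Pi.add_apply, Pi.sub_apply,
        Pi.smul_apply, smul_eq_mul, hxi, hxj, Finset.mul_sum, Finset.sum_mul]
      rw [← Finset.sum_sub_distrib, ← Finset.sum_add_distrib]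
      refine Finset.sum_congr rfl fun b _ => ?_
      rw [hYab]
      ring
    have hWX : W ≤ LinearMap.range X.mulVecLin := by
      rintro w ⟨z, rfl⟩
      rw [Matrix.mulVecLin_apply, hYmulVec z]
      exact Submodule.add_mem _
        (Submodule.sub_mem _ (LinearMap.mem_range_self _ z) (Submodule.smul_mem _ _ hxi_mem))
        (Submodule.smul_mem _ _ hxj_mem)
    have hUX : U ≤ LinearMap.range X.mulVecLin := by
      rw [hU, Submodule.span_le]
      rintro x (rfl | rfl)
      · exact hxi_mem
      · exact hxj_mem
    -- xi and xj are linearly independent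
    have hind : LinearIndependent ℂ ![xi, xj] := by
      rw [LinearIndependent.pair_iff]
      intro a b hab
      have h1 := congrFun hab i
      have h2 := congrFun hab j
      simp only [Pi.add_apply, Pi.smul_apply, smul_eq_mul, Pi.zero_apply, hxi, hxj,
        hdiag i, hdiag j] at h1 h2
      rw [← hc] at h1
      rw [show X j i = -c from by rw [hc]; exact hskew i j] at h2
      constructor
      · have : a * c = 0 := by linear_combination -h2
        rcases mul_eq_zero.mp this with h | h
        · exact h
        · exact absurd h hij
      · have : b * c = 0 := by linear_combination h1
        rcases mul_eq_zero.mp this with h | h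
        · exact h
        · exact absurd h hij
    have hUrank : Module.finrank ℂ U = 2 := by
      have : ({xi, xj} : Set (Fin n → ℂ)) = Set.range ![xi, xj] := by
        ext x
        simp [Fin.exists_fin_two, eq_comm, or_comm]
      rw [hU, this, finrank_span_eq_card hind]
      simp
    have hWU : W ⊓ U = ⊥ := by
      rw [Submodule.eq_bot_iff]
      rintro v ⟨hvW, hvU⟩
      obtain ⟨a, b, rfl⟩ := Submodule.mem_span_pair.mp hvU
      obtain ⟨z, hz⟩ := hvW
      have h1 : (a • xi + b • xj) i = 0 := by rw [← hz]; exact hWi z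
      have h2 : (a • xi + b • xj) j = 0 := by rw [← hz]; exact hWj z
      simp only [Pi.add_apply, Pi.smul_apply, smul_eq_mul, hxi, hxj, hdiag i, hdiag j] at h1 h2
      rw [← hc] at h1
      rw [show X j i = -c from by rw [hc]; exact hskew i j] at h2
      have ha : a = 0 := by
        have : a * c = 0 := by linear_combination -h2
        rcases mul_eq_zero.mp this with h | h
        · exact h
        · exact absurd h hij
      have hb : b = 0 := by
        have : b * c = 0 := by linear_combination h1
        rcases mul_eq_zero.mp this with h | h
        · exact h
        · exact absurd h hij
      simp [ha, hb]
    -- rank bound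
    have hYrank : Y.rank ≤ 2 * s := by
      have hsum := Submodule.finrank_sup_add_finrank_inf_eq W U
      rw [hWU] at hsum
      simp only [finrank_bot, add_zero] at hsum
      have hle : Module.finrank ℂ ↥(W ⊔ U) ≤ X.rank := by
        rw [Matrix.rank]
        exact Submodule.finrank_mono (sup_le hWX hUX)
      have h2 : Module.finrank ℂ W + 2 ≤ 2 * (s + 1) := by
        have he : Module.finrank ℂ W + 2 = Module.finrank ℂ ↥(W ⊔ U) := by
          rw [hsum, hUrank]
        rw [he]
        exact le_trans hle hr
      have h3 : Y.rank = Module.finrank ℂ W := by rw [Matrix.rank, hW]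
      omega
    obtain ⟨A', B', hAB⟩ := ih n Y hYskew hYrank
    refine ⟨Matrix.of fun k => Fin.snoc (A' k) (c⁻¹ * X k i), Matrix.of fun k => Fin.snoc (B' k) (X k j), ?_⟩
    ext a b
    have hYab' : Y a b = (A' * B'ᵀ - B' * A'ᵀ) a b := by rw [← hAB]
    simp only [Matrix.sub_apply, Matrix.mul_apply, Matrix.transpose_apply, Matrix.of_apply] at hYab' ⊢
    rw [Fin.sum_univ_castSucc, Fin.sum_univ_castSucc]
    simp only [Fin.snoc_castSucc, Fin.snoc_last]
    rw [hYab] at hYab'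
    have hc0 : c ≠ 0 := hij
    field_simp at hYab' ⊢
    linear_combination hYab'

/-- Let `J_s = [[0, I_s], [-I_s, 0]]` be the standard skew-symmetric
`(2s)×(2s)` matrix. For `n, s ≥ 1`, the image of the Hilbert map
`α ↦ α J_s αᵀ` on complex `n×(2s)` matrices is exactly the set of
skew-symmetric complex `n×n` matrices of rank at most `2s`. This realizes the
complex affine categorical quotient `Hom(ℂ²ˢ, ℂⁿ) // Sp(s,ℂ)` as the variety
of skew matrices of rank `≤ 2s`, the image in `p⁺` of the closure of the
`s`-th holomorphic nilpotent orbit of `so*(2n)`. -/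
theorem range_hilbert_map_symplectic (n s : ℕ) (hn : 1 ≤ n) (hs : 1 ≤ s)
    (J : Matrix (Fin s ⊕ Fin s) (Fin s ⊕ Fin s) ℂ)
    (hJ : J = Matrix.fromBlocks 0 1 (-1) 0) :
    Set.range (fun α : Matrix (Fin n) (Fin s ⊕ Fin s) ℂ => α * J * αᵀ) =
      {X : Matrix (Fin n) (Fin n) ℂ | Xᵀ = -X ∧ X.rank ≤ 2 * s} := by
  ext X
  simp only [Set.mem_range, Set.mem_setOf_eq]
  constructor
  · rintro ⟨α, rfl⟩
    constructor
    · have hJT : Jᵀ = -J := by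
        rw [hJ, Matrix.fromBlocks_transpose]
        ext a b
        rcases a with a | a <;> rcases b with b | b <;>
          simp [Matrix.fromBlocks]
      rw [Matrix.transpose_mul, Matrix.transpose_mul, Matrix.transpose_transpose, hJT]
      rw [Matrix.mul_assoc]
      simp [Matrix.mul_assoc]
    · calc (α * J * αᵀ).rank ≤ αᵀ.rank := Matrix.rank_mul_le_right _ _
        _ ≤ Fintype.card (Fin s ⊕ Fin s) := Matrix.rank_le_card_height _
        _ = 2 * s := by simp; ring
  · rintro ⟨hskew, hrank⟩
    obtain ⟨A, B, hAB⟩ := skew_decomp s n X hskew hrank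
    refine ⟨Matrix.fromCols A B, ?_⟩
    rw [hJ, Matrix.fromCols_mul_fromBlocks, Matrix.transpose_fromCols,
      Matrix.fromCols_mul_fromRows]
    rw [hAB, Matrix.mul_zero, Matrix.mul_zero, Matrix.mul_neg, Matrix.mul_one,
      Matrix.mul_one, zero_add, add_zero, Matrix.neg_mul]
    abel
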